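/- Let K ∈ ℝ³ˣ³ be symmetric with distinct eigenvalues ordered appropriately and with tr(K)I₃ − K positive definite, and let ℓ_R := λ_min(tr(K)I₃ − K) > 0. Then on the sublevel set S := {R ∈ SO(3) : Ψ_K(R) < ℓ_R}, the only critical point of Ψ_K (i.e., the only R with skew(K R) = 0) is R = I₃. -/

import Mathlib

open Matrix

noncomputable section

/-- Skew-symmetric part: skew(A) = (A − Aᵀ)/2. -/
def skewPart (A : Matrix (Fin 3) (Fin 3) ℝ) : Matrix (Fin 3) (Fin 3) ℝ :=
  (1 / 2 : ℝ) • (A - A.transpose)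

/-- SO(3): 3×3 real orthogonal matrices with determinant 1. -/
def SO3 : Set (Matrix (Fin 3) (Fin 3) ℝ) :=
  {R | R.transpose * R = 1 ∧ R.det = 1}

/-- Navigation function Ψ_K(R) = (1/2) tr(K(I₃ − R)). -/
def PsiK (K R : Matrix (Fin 3) (Fin 3) ℝ) : ℝ :=
  (1 / 2) * (K * (1 - R)).trace

lemma rayleigh_aux {n : Type*} [Fintype n] [DecidableEq n] [Nonempty n]
    {A : Matrix n n ℝ} (hA : A.IsHermitian) {v : n → ℝ} (hv : v ⬝ᵥ v = 1) :
    (⨅ i, hA.eigenvalues i) ≤ v ⬝ᵥ (A *ᵥ v) := by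
  set d := hA.eigenvalues with hd
  set U : Matrix n n ℝ := (hA.eigenvectorUnitary : Matrix n n ℝ) with hU
  have hUU : star U * U = 1 := Unitary.coe_star_mul_self _
  have hUUt : U * star U = 1 := Unitary.coe_mul_star_self _
  have hspec : A = U * diagonal d * star U := by
    simpa using hA.spectral_theorem
  have hsU : star U = Uᵀ := by
    rw [Matrix.star_eq_conjTranspose, conjTranspose_eq_transpose_of_trivial]
  set w := v ᵥ* U with hwdef
  have hUv : star U *ᵥ v = w := by
    rw [hsU, hwdef, ← vecMul_transpose, transpose_transpose]
  have hww : w ⬝ᵥ w = 1 := by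
    conv_lhs => rw [← hUv, dotProduct_mulVec, hUv, hwdef, vecMul_vecMul, hUUt, vecMul_one, hv]
  have hform : v ⬝ᵥ (A *ᵥ v) = ∑ i, d i * (w i * w i) := by
    rw [hspec, dotProduct_mulVec, ← vecMul_vecMul, ← vecMul_vecMul, ← hwdef,
      ← dotProduct_mulVec, hUv]
    simp only [dotProduct, vecMul_diagonal]
    exact Finset.sum_congr rfl fun i _ => by ring
  have hbdd : BddBelow (Set.range d) := (Set.finite_range d).bddBelow
  calc (⨅ i, d i) = (⨅ i, d i) * (w ⬝ᵥ w) := by rw [hww, mul_one]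
    _ = ∑ i, (⨅ j, d j) * (w i * w i) := by
        simp only [dotProduct, Finset.mul_sum]
    _ ≤ ∑ i, d i * (w i * w i) :=
        Finset.sum_le_sum fun i _ =>
          mul_le_mul_of_nonneg_right (ciInf_le hbdd i) (mul_self_nonneg _)
    _ = v ⬝ᵥ (A *ᵥ v) := hform.symm

theorem unique_critical_point_in_sublevel_set
    (K : Matrix (Fin 3) (Fin 3) ℝ) (hKsymm : K.IsSymm)
    (hK : K.IsHermitian) (hdistinct : Function.Injective hK.eigenvalues)
    (hPD : (K.trace • (1 : Matrix (Fin 3) (Fin 3) ℝ) - K).PosDef) :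
    ∀ R ∈ SO3, PsiK K R < (⨅ i, hPD.1.eigenvalues i) →
      skewPart (K * R) = 0 → R = 1 := by
  intro R hR hlt hskew
  obtain ⟨hRtR, hdetR⟩ := hR
  set L : Matrix (Fin 3) (Fin 3) ℝ := K.trace • (1 : Matrix (Fin 3) (Fin 3) ℝ) - K with hL
  set ℓ := ⨅ i, hPD.1.eigenvalues i with hℓ
  -- basic orthogonality facts
  have hRRt : R * Rᵀ = 1 := mul_eq_one_comm.mp hRtR
  have hsR : star R = Rᵀ := by
    rw [Matrix.star_eq_conjTranspose, conjTranspose_eq_transpose_of_trivial]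
  -- from the skew part being zero: K*R = Rᵀ*K
  have hKR : K * R = Rᵀ * K := by
    have h1 : (K * R) - (K * R)ᵀ = 0 := by
      have := congrArg (fun M => (2 : ℝ) • M) hskew
      simpa [skewPart, smul_smul] using this
    have h2 : K * R = (K * R)ᵀ := by
      rw [sub_eq_zero] at h1; exact h1
    calc K * R = (K * R)ᵀ := h2
      _ = Rᵀ * Kᵀ := transpose_mul _ _
      _ = Rᵀ * K := by rw [hKsymm.eq]
  have hRK : R * K = K * Rᵀ := by
    calc R * K = R * K * (R * Rᵀ) := by rw [hRRt, mul_one]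
      _ = R * (K * R) * Rᵀ := by noncomm_ring
      _ = R * (Rᵀ * K) * Rᵀ := by rw [hKR]
      _ = (R * Rᵀ) * K * Rᵀ := by noncomm_ring
      _ = K * Rᵀ := by rw [hRRt, one_mul]
  -- spectral setup
  set d := hK.eigenvalues with hd
  set U : Matrix (Fin 3) (Fin 3) ℝ := (hK.eigenvectorUnitary : Matrix (Fin 3) (Fin 3) ℝ) with hU
  have hUU : star U * U = 1 := Unitary.coe_star_mul_self _
  have hUUt : U * star U = 1 := Unitary.coe_mul_star_self _
  have hspec : K = U * diagonal d * star U := by simpa using hK.spectral_theorem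
  have hcan1 : ∀ X : Matrix (Fin 3) (Fin 3) ℝ, U * (star U * X) = X := fun X => by
    rw [← Matrix.mul_assoc, hUUt, Matrix.one_mul]
  have hcan2 : ∀ X : Matrix (Fin 3) (Fin 3) ℝ, star U * (U * X) = X := fun X => by
    rw [← Matrix.mul_assoc, hUU, Matrix.one_mul]
  have hKspec : star U * K * U = diagonal d := by
    rw [hspec]; simp only [Matrix.mul_assoc, hcan2]
    rw [hUU, Matrix.mul_one]
  set S := star U * R * U with hSdef
  have hsS : star S = star U * star R * U := by
    rw [hSdef]; simp [star_star, mul_assoc]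
  -- trace of K
  have htr : K.trace = d 0 + d 1 + d 2 := by
    rw [hspec, Matrix.trace_mul_comm (U * diagonal d) (star U), ← Matrix.mul_assoc, hUU,
      Matrix.one_mul, Matrix.trace_diagonal, Fin.sum_univ_three]
  -- positivity and Rayleigh bound via columns of U
  have hcols : ∀ l : Fin 3, 0 < K.trace - d l ∧ ℓ ≤ K.trace - d l := by
    intro l
    set u : Fin 3 → ℝ := fun i => U i l with hu
    have huu : u ⬝ᵥ u = 1 := by
      have := congrFun (congrFun hUU l) l
      simpa [Matrix.mul_apply, Matrix.one_apply, dotProduct, hu, Matrix.star_apply] using this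
    have hKU : K * U = U * diagonal d := by
      rw [hspec, Matrix.mul_assoc, Matrix.mul_assoc, hUU, Matrix.mul_one]
    have hKu : K *ᵥ u = d l • u := by
      funext i
      have h1 : (K *ᵥ u) i = (K * U) i l := by
        simp [Matrix.mulVec, dotProduct, Matrix.mul_apply, hu]
      rw [h1, hKU, Matrix.mul_diagonal]
      simp [hu, mul_comm]
    have hLu : L *ᵥ u = K.trace • u - d l • u := by
      rw [hL, Matrix.sub_mulVec, Matrix.smul_mulVec, Matrix.one_mulVec, hKu]
    have hdot : u ⬝ᵥ (L *ᵥ u) = K.trace - d l := by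
      rw [hLu, dotProduct_sub, dotProduct_smul, dotProduct_smul, huu]
      simp
    have hune : u ≠ 0 := by
      intro h
      rw [h] at huu
      simp at huu
    constructor
    · have := hPD.dotProduct_mulVec_pos hune
      simpa [hdot, star_trivial] using this
    · rw [← hdot]
      exact rayleigh_aux hPD.1 huu
  -- the two commutation relations in the eigenbasis
  have key1 : diagonal d * S = star S * diagonal d := by
    have e1 : diagonal d * S = star U * (K * R) * U := by
      rw [← hKspec, hSdef]
      simp only [Matrix.mul_assoc, hcan1]
    have e2 : star S * diagonal d = star U * (star R * K) * U := by
      rw [← hKspec, hsS]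
      simp only [Matrix.mul_assoc, hcan1]
    rw [e1, e2, hsR, hKR]
  have key2 : S * diagonal d = diagonal d * star S := by
    have e1 : S * diagonal d = star U * (R * K) * U := by
      rw [← hKspec, hSdef]
      simp only [Matrix.mul_assoc, hcan1]
    have e2 : diagonal d * star S = star U * (K * star R) * U := by
      rw [← hKspec, hsS]
      simp only [Matrix.mul_assoc, hcan1]
    rw [e1, e2, hsR, hRK]
  have hpos : ∀ i j : Fin 3, i ≠ j → 0 < d i + d j := by
    have h0 := (hcols 0).1
    have h1 := (hcols 1).1
    have h2 := (hcols 2).1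
    rw [htr] at h0 h1 h2
    intro i j hij
    fin_cases i <;> fin_cases j <;>
      simp only [Fin.isValue, Fin.mk_zero, Fin.mk_one, Fin.reduceFinMk] at hij ⊢ <;>
      first | (exact absurd rfl hij) | linarith
  -- off-diagonal entries of S vanish
  have hoff : ∀ i j, i ≠ j → S i j = 0 := by
    intro i j hij
    have e1 : d i * S i j = S j i * d j := by
      have := congrFun (congrFun key1 i) j
      simpa [Matrix.diagonal_mul, Matrix.mul_diagonal, Matrix.star_apply, star_trivial]
        using this
    have e2 : S i j * d j = d i * S j i := by
      have := congrFun (congrFun key2 i) j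
      simpa [Matrix.diagonal_mul, Matrix.mul_diagonal, Matrix.star_apply, star_trivial]
        using this
    have hsum : (d i + d j) * (S i j - S j i) = 0 := by linear_combination e1 + e2
    have hdiff : (d i - d j) * (S i j + S j i) = 0 := by linear_combination e1 - e2
    have hdne : d i ≠ d j := fun h => hij (hdistinct h)
    have hA : S i j - S j i = 0 := by
      rcases mul_eq_zero.mp hsum with h | h
      · exact absurd h (by have := hpos i j hij; linarith)
      · exact h
    have hB : S i j + S j i = 0 := by
      rcases mul_eq_zero.mp hdiff with h | h
      · exact absurd h (by intro hc; exact hdne (by linarith))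
      · exact h
    linarith
  set s : Fin 3 → ℝ := fun i => S i i with hs
  have hSdiag : S = diagonal s := by
    ext i j
    by_cases h : i = j
    · subst h; simp [Matrix.diagonal_apply_eq, hs]
    · rw [Matrix.diagonal_apply_ne _ h]; exact hoff i j h
  -- S is orthogonal, so s i = ±1
  have hsRR : star R * R = 1 := by rw [hsR]; exact hRtR
  have hStS : star S * S = 1 := by
    rw [hsS, hSdef]
    simp only [Matrix.mul_assoc, hcan1]
    rw [← Matrix.mul_assoc (star R) R U, hsRR, Matrix.one_mul, hUU]
  have hs2 : ∀ i, s i * s i = 1 := by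
    intro i
    have hdd : diagonal s * diagonal s = 1 := by
      have hstars : (star s : Fin 3 → ℝ) = s := by funext j; simp
      calc diagonal s * diagonal s = star S * S := by
            rw [hSdiag, Matrix.star_eq_conjTranspose, Matrix.diagonal_conjTranspose, hstars]
      _ = 1 := hStS
    rw [Matrix.diagonal_mul_diagonal] at hdd
    have := congrFun (congrFun hdd i) i
    simpa [Matrix.diagonal_apply_eq, Matrix.one_apply] using this
  have hsval : ∀ i, s i = 1 ∨ s i = -1 := fun i => mul_self_eq_one_iff.mp (hs2 i)
  -- determinant of S
  have hdetS : S.det = 1 := by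
    have hdUU : (star U).det * U.det = 1 := by rw [← Matrix.det_mul, hUU, Matrix.det_one]
    rw [hSdef, Matrix.det_mul, Matrix.det_mul, hdetR, mul_one, hdUU]
  have hprod : s 0 * s 1 * s 2 = 1 := by
    have h := hdetS
    rw [hSdiag, Matrix.det_diagonal, Fin.prod_univ_three] at h
    exact h
  -- value of PsiK
  have htrKR : (K * R).trace = (diagonal d * S).trace := by
    have e : diagonal d * (star U * R) * U = diagonal d * S := by
      rw [hSdef]; simp only [Matrix.mul_assoc]
    rw [hspec, Matrix.mul_assoc, Matrix.mul_assoc, Matrix.trace_mul_comm U, ← Matrix.mul_assoc,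
      ← Matrix.mul_assoc, Matrix.mul_assoc (diagonal d), e]
  have hPsi : PsiK K R = 1/2 * (K.trace - (d 0 * s 0 + d 1 * s 1 + d 2 * s 2)) := by
    have hDS : (diagonal d * S).trace = d 0 * s 0 + d 1 * s 1 + d 2 * s 2 := by
      simp [Matrix.trace, Matrix.diag, Matrix.diagonal_mul, Fin.sum_univ_three, hs]
    rw [PsiK, mul_sub, mul_one, Matrix.trace_sub, htrKR, hDS]
  -- recover R from S
  have hRS : R = U * S * star U := by
    rw [hSdef]
    calc R = (U * star U) * R * (U * star U) := by rw [hUUt, Matrix.one_mul, Matrix.mul_one]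
      _ = U * (star U * R * U) * star U := by noncomm_ring
  have hb0 := (hcols 0).2
  have hb1 := (hcols 1).2
  have hb2 := (hcols 2).2
  rcases hsval 0 with h0 | h0 <;> rcases hsval 1 with h1 | h1 <;> rcases hsval 2 with h2 | h2
  · -- s = (1,1,1)
    have hs1 : s = fun _ => (1 : ℝ) := by
      funext i; fin_cases i <;> assumption
    have hS1 : S = 1 := by rw [hSdiag, hs1]; exact Matrix.diagonal_one
    rw [hRS, hS1, Matrix.mul_one, hUUt]
  · rw [h0, h1, h2] at hprod; norm_num at hprod
  · rw [h0, h1, h2] at hprod; norm_num at hprod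
  · rw [h0, h1, h2] at hPsi; ring_nf at hPsi; linarith
  · rw [h0, h1, h2] at hprod; norm_num at hprod
  · rw [h0, h1, h2] at hPsi; ring_nf at hPsi; linarith
  · rw [h0, h1, h2] at hPsi; ring_nf at hPsi; linarith
  · rw [h0, h1, h2] at hprod; norm_num at hprod
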